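/- Let ψ : ℝ² → ℝ be C² (coordinates (y,t)) and let S = {(ψ(y,t), y, t) : (y,t) ∈ ℝ²} ⊂ H^1 be the corresponding entire graph over the (y,t)-plane. With the defining function φ(x,y,t) = x − ψ(y,t) set p(x,y,t) = X1φ = 1 + (y/2)ψ_t(y,t), q(x,y,t) = X2φ = −ψ_y(y,t) − (x/2)ψ_t(y,t), and W = √(p²+q²). Assume: (i) S has empty characteristic locus, i.e. W > 0 at every point of S; (ii) S is H-minimal, i.e. X1(p/W) + X2(q/W) = 0 at every point of S (the derivatives being taken on the open set where W > 0); and (iii) S is not a vertical plane, i.e. there do not exist α, β ∈ ℝ with ψ(y,t) = αy + β for all (y,t). Then there exist g₀ ∈ H^1, a nonempty open interval I ⊆ ℝ, and a C² function G : I → ℝ with G'(t) > 0 for every t ∈ I, such that g₀ ∘ (yG(t), y, t) ∈ S for every (y,t) ∈ ℝ × I; that is, after a left-translation, S contains the strict graphical strip {(yG(t), y, t) : y ∈ ℝ, t ∈ I}. -/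

import Mathlib

/-- `ψ_t(y,t)`, the partial derivative of `ψ` in `t`. -/
noncomputable def psiT (ψ : ℝ × ℝ → ℝ) (y t : ℝ) : ℝ := deriv (fun t' => ψ (y, t')) t

/-- `ψ_y(y,t)`, the partial derivative of `ψ` in `y`. -/
noncomputable def psiY (ψ : ℝ × ℝ → ℝ) (y t : ℝ) : ℝ := deriv (fun y' => ψ (y', t)) y

/-- `p = X1φ = 1 + (y/2)ψ_t` for the defining function `φ(x,y,t) = x − ψ(y,t)`. -/
noncomputable def pfun (ψ : ℝ × ℝ → ℝ) (g : ℝ × ℝ × ℝ) : ℝ :=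
  1 + g.2.1 / 2 * psiT ψ g.2.1 g.2.2

/-- `q = X2φ = −ψ_y − (x/2)ψ_t`. -/
noncomputable def qfun (ψ : ℝ × ℝ → ℝ) (g : ℝ × ℝ × ℝ) : ℝ :=
  -psiY ψ g.2.1 g.2.2 - g.1 / 2 * psiT ψ g.2.1 g.2.2

/-- The angle function `W = √(p² + q²)`. -/
noncomputable def Wfun (ψ : ℝ × ℝ → ℝ) (g : ℝ × ℝ × ℝ) : ℝ :=
  Real.sqrt (pfun ψ g ^ 2 + qfun ψ g ^ 2)

/-- Partial derivative in `x` of a function on `ℝ³`. -/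
noncomputable def dX (f : ℝ × ℝ × ℝ → ℝ) (g : ℝ × ℝ × ℝ) : ℝ :=
  deriv (fun x => f (x, g.2.1, g.2.2)) g.1

/-- Partial derivative in `y` of a function on `ℝ³`. -/
noncomputable def dYc (f : ℝ × ℝ × ℝ → ℝ) (g : ℝ × ℝ × ℝ) : ℝ :=
  deriv (fun y => f (g.1, y, g.2.2)) g.2.1

/-- Partial derivative in `t` of a function on `ℝ³`. -/
noncomputable def dT (f : ℝ × ℝ × ℝ → ℝ) (g : ℝ × ℝ × ℝ) : ℝ :=
  deriv (fun t => f (g.1, g.2.1, t)) g.2.2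

/-- The left-invariant vector field `X1 = ∂/∂x − (y/2)∂/∂t` acting on functions. -/
noncomputable def X1op (f : ℝ × ℝ × ℝ → ℝ) (g : ℝ × ℝ × ℝ) : ℝ :=
  dX f g - g.2.1 / 2 * dT f g

/-- The left-invariant vector field `X2 = ∂/∂y + (x/2)∂/∂t` acting on functions. -/
noncomputable def X2op (f : ℝ × ℝ × ℝ → ℝ) (g : ℝ × ℝ × ℝ) : ℝ :=
  dYc f g + g.1 / 2 * dT f g

/-- The Heisenberg group law on `ℝ³`. -/
noncomputable def hmul (g g' : ℝ × ℝ × ℝ) : ℝ × ℝ × ℝ :=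
  (g.1 + g'.1, g.2.1 + g'.2.1, g.2.2 + g'.2.2 + (g.1 * g'.2.1 - g'.1 * g.2.1) / 2)

namespace Stmt19Aux

variable (ψ : ℝ × ℝ → ℝ)

noncomputable def Uf (w : ℝ × ℝ) : ℝ := fderiv ℝ ψ w (1, 0)
noncomputable def Vf (w : ℝ × ℝ) : ℝ := fderiv ℝ ψ w (0, 1)
noncomputable def Pf (w : ℝ × ℝ) : ℝ := 1 + w.1 / 2 * Vf ψ w
noncomputable def Qf (w : ℝ × ℝ) : ℝ := -Uf ψ w - ψ w / 2 * Vf ψ w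
noncomputable def Rf (w : ℝ × ℝ) : ℝ := (w.1 * Qf ψ w + ψ w * Pf ψ w) / 2
noncomputable def Ayy (w : ℝ × ℝ) : ℝ := fderiv ℝ (Uf ψ) w (1, 0)
noncomputable def Ayt (w : ℝ × ℝ) : ℝ := fderiv ℝ (Vf ψ) w (1, 0)
noncomputable def Att (w : ℝ × ℝ) : ℝ := fderiv ℝ (Vf ψ) w (0, 1)

variable {ψ}

/-- application of a CLM at a pair -/
lemma clm_pair (L : ℝ × ℝ →L[ℝ] ℝ) (a b : ℝ) :
    L (a, b) = a * L (1, 0) + b * L (0, 1) := by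
  have h : ((a, b) : ℝ × ℝ) = a • ((1, 0) : ℝ × ℝ) + b • ((0, 1) : ℝ × ℝ) := by
    simp [Prod.ext_iff]
  rw [h, map_add, map_smul, map_smul, smul_eq_mul, smul_eq_mul]

lemma hasDerivAt_sliceY {f : ℝ × ℝ → ℝ} (hf : Differentiable ℝ f) (y t : ℝ) :
    HasDerivAt (fun y' => f (y', t)) (fderiv ℝ f (y, t) (1, 0)) y := by
  have h1 : HasDerivAt (fun y' : ℝ => ((y' : ℝ), t)) ((1 : ℝ), (0 : ℝ)) y :=
    (hasDerivAt_id y).prodMk (hasDerivAt_const y t)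
  exact ((hf (y, t)).hasFDerivAt.comp_hasDerivAt y h1)

lemma hasDerivAt_sliceT {f : ℝ × ℝ → ℝ} (hf : Differentiable ℝ f) (y t : ℝ) :
    HasDerivAt (fun t' => f (y, t')) (fderiv ℝ f (y, t) (0, 1)) t := by
  have h1 : HasDerivAt (fun t' : ℝ => ((y : ℝ), (t' : ℝ))) ((0 : ℝ), (1 : ℝ)) t :=
    (hasDerivAt_const t y).prodMk (hasDerivAt_id t)
  exact ((hf (y, t)).hasFDerivAt.comp_hasDerivAt t h1)

lemma hasDerivAt_line {f : ℝ × ℝ → ℝ} (hf : Differentiable ℝ f) (w z : ℝ × ℝ) (s : ℝ) :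
    HasDerivAt (fun s' : ℝ => f (w + s' • z)) (fderiv ℝ f (w + s • z) z) s := by
  have h1 : HasDerivAt (fun s' : ℝ => w + s' • z) z s := by
    simpa using ((hasDerivAt_id s).smul_const z).const_add w
  exact ((hf (w + s • z)).hasFDerivAt.comp_hasDerivAt s h1)



/-- Key helper: derivatives of `p/W` and `q/W` along a one-variable slice. -/
lemma slice_div_deriv {pp qq : ℝ → ℝ} {p q dp dq x₀ : ℝ}
    (hp : HasDerivAt pp dp x₀) (hq : HasDerivAt qq dq x₀)
    (hpv : pp x₀ = p) (hqv : qq x₀ = q) (hpos : 0 < p ^ 2 + q ^ 2) :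
    HasDerivAt (fun x => pp x / Real.sqrt (pp x ^ 2 + qq x ^ 2))
      (q * (q * dp - p * dq) / Real.sqrt (p ^ 2 + q ^ 2) ^ 3) x₀ ∧
    HasDerivAt (fun x => qq x / Real.sqrt (pp x ^ 2 + qq x ^ 2))
      (p * (p * dq - q * dp) / Real.sqrt (p ^ 2 + q ^ 2) ^ 3) x₀ := by
  have hSv : pp x₀ ^ 2 + qq x₀ ^ 2 = p ^ 2 + q ^ 2 := by rw [hpv, hqv]
  have hSne : pp x₀ ^ 2 + qq x₀ ^ 2 ≠ 0 := by rw [hSv]; exact ne_of_gt hpos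
  have hWpos : 0 < Real.sqrt (p ^ 2 + q ^ 2) := Real.sqrt_pos.mpr hpos
  have hWne : Real.sqrt (p ^ 2 + q ^ 2) ≠ 0 := hWpos.ne'
  have hW2 : Real.sqrt (p ^ 2 + q ^ 2) ^ 2 = p ^ 2 + q ^ 2 := Real.sq_sqrt hpos.le
  have hS : HasDerivAt (fun x => pp x ^ 2 + qq x ^ 2) (2 * p * dp + 2 * q * dq) x₀ := by
    have := (hp.pow 2).add (hq.pow 2)
    refine this.congr_deriv (Eq.symm ?_)
    rw [hpv, hqv]; push_cast; ring
  have hW : HasDerivAt (fun x => Real.sqrt (pp x ^ 2 + qq x ^ 2))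
      ((p * dp + q * dq) / Real.sqrt (p ^ 2 + q ^ 2)) x₀ := by
    have h0 := (Real.hasDerivAt_sqrt hSne).comp x₀ hS
    have hval : 1 / (2 * Real.sqrt (pp x₀ ^ 2 + qq x₀ ^ 2)) * (2 * p * dp + 2 * q * dq)
        = (p * dp + q * dq) / Real.sqrt (p ^ 2 + q ^ 2) := by
      rw [hSv]; field_simp
    rw [← hval]
    exact h0
  have hWv : Real.sqrt (pp x₀ ^ 2 + qq x₀ ^ 2) ≠ 0 := by rw [hSv]; exact hWne
  have hWW : Real.sqrt (p ^ 2 + q ^ 2) * Real.sqrt (p ^ 2 + q ^ 2) ^ 2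
      = Real.sqrt (p ^ 2 + q ^ 2) ^ 3 := by ring
  constructor
  · have hd := hp.div hW hWv
    refine hd.congr_deriv (Eq.symm ?_)
    rw [hpv, hqv]
    have e1 : dp * Real.sqrt (p ^ 2 + q ^ 2)
        - p * ((p * dp + q * dq) / Real.sqrt (p ^ 2 + q ^ 2))
        = (dp * (p ^ 2 + q ^ 2) - p * (p * dp + q * dq)) / Real.sqrt (p ^ 2 + q ^ 2) := by
      field_simp
      linear_combination dp * hW2
    rw [e1, div_div, hWW]
    congr 1; ring
  · have hd := hq.div hW hWv
    refine hd.congr_deriv (Eq.symm ?_)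
    rw [hpv, hqv]
    have e1 : dq * Real.sqrt (p ^ 2 + q ^ 2)
        - q * ((p * dp + q * dq) / Real.sqrt (p ^ 2 + q ^ 2))
        = (dq * (p ^ 2 + q ^ 2) - q * (p * dp + q * dq)) / Real.sqrt (p ^ 2 + q ^ 2) := by
      field_simp
      linear_combination dq * hW2
    rw [e1, div_div, hWW]
    congr 1; ring


section base
variable (hψ : ContDiff ℝ 2 ψ)
include hψ

lemma diffψ : Differentiable ℝ ψ := hψ.differentiable (by norm_num)

lemma contDiff_U : ContDiff ℝ 1 (Uf ψ) :=
  (hψ.fderiv_right (by norm_num)).clm_apply contDiff_const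

lemma contDiff_V : ContDiff ℝ 1 (Vf ψ) :=
  (hψ.fderiv_right (by norm_num)).clm_apply contDiff_const

lemma diffU : Differentiable ℝ (Uf ψ) := (contDiff_U hψ).differentiable one_ne_zero
lemma diffV : Differentiable ℝ (Vf ψ) := (contDiff_V hψ).differentiable one_ne_zero

lemma psiT_eq (y t : ℝ) : psiT ψ y t = Vf ψ (y, t) :=
  (hasDerivAt_sliceT (diffψ hψ) y t).deriv

lemma psiY_eq (y t : ℝ) : psiY ψ y t = Uf ψ (y, t) :=
  (hasDerivAt_sliceY (diffψ hψ) y t).deriv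

/-- Schwarz symmetry: `∂_t U = ∂_y V`. -/
lemma schwarz (w : ℝ × ℝ) : fderiv ℝ (Uf ψ) w (0, 1) = Ayt ψ w := by
  have hΦ : ContDiff ℝ 1 (fderiv ℝ ψ) := hψ.fderiv_right (by norm_num)
  have hΦd : Differentiable ℝ (fderiv ℝ ψ) := hΦ.differentiable one_ne_zero
  have hsymm := second_derivative_symmetric
    (f := ψ) (f' := fderiv ℝ ψ) (f'' := fderiv ℝ (fderiv ℝ ψ) w)
    (fun y => ((diffψ hψ) y).hasFDerivAt) ((hΦd w).hasFDerivAt)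
  have hU : fderiv ℝ (Uf ψ) w = (fderiv ℝ (fderiv ℝ ψ) w).flip ((1 : ℝ), (0 : ℝ)) := by
    have := fderiv_clm_apply (𝕜 := ℝ) (c := fderiv ℝ ψ)
      (u := fun _ : ℝ × ℝ => ((1 : ℝ), (0 : ℝ))) (hΦd w) (differentiableAt_const _)
    unfold Uf; simpa [fderiv_const] using this
  have hV : fderiv ℝ (Vf ψ) w = (fderiv ℝ (fderiv ℝ ψ) w).flip ((0 : ℝ), (1 : ℝ)) := by
    have := fderiv_clm_apply (𝕜 := ℝ) (c := fderiv ℝ ψ)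
      (u := fun _ : ℝ × ℝ => ((0 : ℝ), (1 : ℝ))) (hΦd w) (differentiableAt_const _)
    unfold Vf; simpa [fderiv_const] using this
  rw [hU, Ayt, hV]
  simpa using hsymm (0, 1) (1, 0)

end base

section pde
variable (hψ : ContDiff ℝ 2 ψ)
include hψ

lemma pfun_on_graph (y t : ℝ) : pfun ψ (ψ (y, t), y, t) = Pf ψ (y, t) := by
  simp [pfun, Pf, psiT_eq hψ]

lemma qfun_on_graph (y t : ℝ) : qfun ψ (ψ (y, t), y, t) = Qf ψ (y, t) := by
  simp [qfun, Qf, psiT_eq hψ, psiY_eq hψ]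

lemma Spos (hchar : ∀ y t : ℝ, 0 < Wfun ψ (ψ (y, t), y, t)) (y t : ℝ) :
    0 < Pf ψ (y, t) ^ 2 + Qf ψ (y, t) ^ 2 := by
  have h := hchar y t
  rw [Wfun, pfun_on_graph hψ, qfun_on_graph hψ] at h
  rcases le_or_gt (Pf ψ (y, t) ^ 2 + Qf ψ (y, t) ^ 2) 0 with hle | hlt
  · rw [Real.sqrt_eq_zero'.mpr hle] at h
    exact absurd h (lt_irrefl 0)
  · exact hlt

/-- The H-minimal surface equation for the graph `x = ψ(y,t)`. -/
lemma minimal_pde (hchar : ∀ y t : ℝ, 0 < Wfun ψ (ψ (y, t), y, t))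
    (hmin : ∀ y t : ℝ,
      X1op (fun g => pfun ψ g / Wfun ψ g) (ψ (y, t), y, t)
        + X2op (fun g => qfun ψ g / Wfun ψ g) (ψ (y, t), y, t) = 0)
    (y t : ℝ) :
    Pf ψ (y, t) ^ 2 * Ayy ψ (y, t) + 2 * Pf ψ (y, t) * Rf ψ (y, t) * Ayt ψ (y, t)
      + Rf ψ (y, t) ^ 2 * Att ψ (y, t) = 0 := by
  have hpos : 0 < Pf ψ (y, t) ^ 2 + Qf ψ (y, t) ^ 2 := Spos hψ hchar y t
  set x := ψ (y, t) with hx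
  set u := Uf ψ (y, t) with hu
  set v := Vf ψ (y, t) with hv
  set A := Ayy ψ (y, t) with hA
  set B := Ayt ψ (y, t) with hB
  set C := Att ψ (y, t) with hC
  set p := Pf ψ (y, t) with hp
  set q := Qf ψ (y, t) with hq
  set W := Real.sqrt (p ^ 2 + q ^ 2) with hW
  have hWne : W ≠ 0 := (Real.sqrt_pos.mpr hpos).ne'
  have hVt : HasDerivAt (fun t' => Vf ψ (y, t')) C t := hasDerivAt_sliceT (diffV hψ) y t
  have hUt : HasDerivAt (fun t' => Uf ψ (y, t')) B t := by
    have h0 := hasDerivAt_sliceT (diffU hψ) y t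
    rw [hB, ← schwarz hψ (y, t)]
    exact h0
  have hVy : HasDerivAt (fun y' => Vf ψ (y', t)) B y := hasDerivAt_sliceY (diffV hψ) y t
  have hUy : HasDerivAt (fun y' => Uf ψ (y', t)) A y := hasDerivAt_sliceY (diffU hψ) y t
  -- x-slice
  have hpx : HasDerivAt (fun _ : ℝ => 1 + y / 2 * Vf ψ (y, t)) 0 x := hasDerivAt_const x _
  have hqx : HasDerivAt (fun x' : ℝ => -Uf ψ (y, t) - x' / 2 * Vf ψ (y, t)) (-(1 / 2 * v)) x :=
    HasDerivAt.const_sub _ (((hasDerivAt_id x).div_const 2).mul_const _)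
  have hXs := slice_div_deriv hpx hqx (by rw [hp]; rfl) (by rw [hq]; rfl) hpos
  -- t-slice
  have hpt : HasDerivAt (fun t' : ℝ => 1 + y / 2 * Vf ψ (y, t')) (y / 2 * C) t :=
    (hVt.const_mul (y / 2)).const_add 1
  have hqt : HasDerivAt (fun t' : ℝ => -Uf ψ (y, t') - x / 2 * Vf ψ (y, t'))
      (-B - x / 2 * C) t := hUt.neg.sub (hVt.const_mul (x / 2))
  have hTs := slice_div_deriv hpt hqt (by rw [hp]; rfl) (by rw [hq]; rfl) hpos
  -- y-slice
  have hpy : HasDerivAt (fun y' : ℝ => 1 + y' / 2 * Vf ψ (y', t)) (v / 2 + y / 2 * B) y := by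
    have h1 : HasDerivAt (fun y' : ℝ => y' / 2) (1 / 2) y := (hasDerivAt_id y).div_const 2
    have h2 := (h1.mul hVy).const_add 1
    refine h2.congr_deriv (Eq.symm ?_)
    rw [hv]; ring
  have hqy : HasDerivAt (fun y' : ℝ => -Uf ψ (y', t) - x / 2 * Vf ψ (y', t))
      (-A - x / 2 * B) y := hUy.neg.sub (hVy.const_mul (x / 2))
  have hYs := slice_div_deriv hpy hqy
    (by rw [hp, Pf]) (by rw [hq, Qf, hx]) hpos
  -- rewrite the four partial derivatives appearing in hmin
  have hfx : (fun x' => pfun ψ (x', y, t) / Wfun ψ (x', y, t))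
      = (fun x' => (1 + y / 2 * Vf ψ (y, t)) /
          Real.sqrt ((1 + y / 2 * Vf ψ (y, t)) ^ 2
            + (-Uf ψ (y, t) - x' / 2 * Vf ψ (y, t)) ^ 2)) := by
    funext x'
    simp [pfun, qfun, Wfun, psiT_eq hψ, psiY_eq hψ]
  have hfpt : (fun t' => pfun ψ (x, y, t') / Wfun ψ (x, y, t'))
      = (fun t' => (1 + y / 2 * Vf ψ (y, t')) /
          Real.sqrt ((1 + y / 2 * Vf ψ (y, t')) ^ 2
            + (-Uf ψ (y, t') - x / 2 * Vf ψ (y, t')) ^ 2)) := by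
    funext t'
    simp [pfun, qfun, Wfun, psiT_eq hψ, psiY_eq hψ]
  have hfqt : (fun t' => qfun ψ (x, y, t') / Wfun ψ (x, y, t'))
      = (fun t' => (-Uf ψ (y, t') - x / 2 * Vf ψ (y, t')) /
          Real.sqrt ((1 + y / 2 * Vf ψ (y, t')) ^ 2
            + (-Uf ψ (y, t') - x / 2 * Vf ψ (y, t')) ^ 2)) := by
    funext t'
    simp [pfun, qfun, Wfun, psiT_eq hψ, psiY_eq hψ]
  have hfqy : (fun y' => qfun ψ (x, y', t) / Wfun ψ (x, y', t))
      = (fun y' => (-Uf ψ (y', t) - x / 2 * Vf ψ (y', t)) /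
          Real.sqrt ((1 + y' / 2 * Vf ψ (y', t)) ^ 2
            + (-Uf ψ (y', t) - x / 2 * Vf ψ (y', t)) ^ 2)) := by
    funext y'
    simp [pfun, qfun, Wfun, psiT_eq hψ, psiY_eq hψ]
  have hdX : dX (fun g => pfun ψ g / Wfun ψ g) (x, y, t)
      = q * (q * 0 - p * (-(1 / 2 * v))) / W ^ 3 := by
    show deriv (fun x' => pfun ψ (x', y, t) / Wfun ψ (x', y, t)) x = _
    rw [hfx]
    exact hXs.1.deriv
  have hdTp : dT (fun g => pfun ψ g / Wfun ψ g) (x, y, t)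
      = q * (q * (y / 2 * C) - p * (-B - x / 2 * C)) / W ^ 3 := by
    show deriv (fun t' => pfun ψ (x, y, t') / Wfun ψ (x, y, t')) t = _
    rw [hfpt]
    exact hTs.1.deriv
  have hdYq : dYc (fun g => qfun ψ g / Wfun ψ g) (x, y, t)
      = p * (p * (-A - x / 2 * B) - q * (v / 2 + y / 2 * B)) / W ^ 3 := by
    show deriv (fun y' => qfun ψ (x, y', t) / Wfun ψ (x, y', t)) y = _
    rw [hfqy]
    exact hYs.2.deriv
  have hdTq : dT (fun g => qfun ψ g / Wfun ψ g) (x, y, t)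
      = p * (p * (-B - x / 2 * C) - q * (y / 2 * C)) / W ^ 3 := by
    show deriv (fun t' => qfun ψ (x, y, t') / Wfun ψ (x, y, t')) t = _
    rw [hfqt]
    exact hTs.2.deriv
  have hmineq := hmin y t
  rw [show (ψ (y, t), y, t) = ((x, y, t) : ℝ × ℝ × ℝ) from rfl] at hmineq
  rw [X1op, X2op] at hmineq
  rw [show ((x, y, t) : ℝ × ℝ × ℝ).2.1 = y from rfl,
      show ((x, y, t) : ℝ × ℝ × ℝ).1 = x from rfl] at hmineq
  rw [hdX, hdTp, hdYq, hdTq] at hmineq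
  have hnum : (q * (q * 0 - p * (-(1 / 2 * v)))
      - y / 2 * (q * (q * (y / 2 * C) - p * (-B - x / 2 * C)))
      + (p * (p * (-A - x / 2 * B) - q * (v / 2 + y / 2 * B))
        + x / 2 * (p * (p * (-B - x / 2 * C) - q * (y / 2 * C))))) / W ^ 3 = 0 := by
    linear_combination hmineq
  have hW3 : W ^ 3 ≠ 0 := pow_ne_zero _ hWne
  have hN := (div_eq_zero_iff.mp hnum).resolve_right hW3
  have hr : Rf ψ (y, t) = (y * q + x * p) / 2 := by
    rw [Rf]
  rw [hr]
  linear_combination -hN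

end pde

section lines
variable (ψ)

/-- The planar characteristic vector field `Z = (P, R)`. -/
noncomputable def Zv (w : ℝ × ℝ) : ℝ × ℝ := (Pf ψ w, Rf ψ w)

/-- directional derivative formula for `Pf` in direction `z` -/
noncomputable def DPz (w z : ℝ × ℝ) : ℝ :=
  z.1 / 2 * Vf ψ w + w.1 / 2 * (z.1 * Ayt ψ w + z.2 * Att ψ w)

/-- directional derivative formula for `Qf` in direction `z` -/
noncomputable def DQz (w z : ℝ × ℝ) : ℝ :=
  -(z.1 * Ayy ψ w + z.2 * Ayt ψ w) - (z.1 * Uf ψ w + z.2 * Vf ψ w) / 2 * Vf ψ w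
    - ψ w / 2 * (z.1 * Ayt ψ w + z.2 * Att ψ w)

/-- directional derivative formula for `Rf` in direction `z` -/
noncomputable def DRz (w z : ℝ × ℝ) : ℝ :=
  (z.1 * Qf ψ w + w.1 * DQz ψ w z + (z.1 * Uf ψ w + z.2 * Vf ψ w) * Pf ψ w
    + ψ w * DPz ψ w z) / 2

variable {ψ}

lemma I1 (w : ℝ × ℝ) : Uf ψ w * Pf ψ w + Vf ψ w * Rf ψ w = -Qf ψ w := by
  simp only [Pf, Qf, Rf]; ring

section moar
variable (hψ : ContDiff ℝ 2 ψ)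
include hψ

lemma SposW (hchar : ∀ y t : ℝ, 0 < Wfun ψ (ψ (y, t), y, t)) (w : ℝ × ℝ) :
    0 < Pf ψ w ^ 2 + Qf ψ w ^ 2 := by
  have := Spos hψ hchar w.1 w.2
  simpa using this

lemma Zv_ne (hchar : ∀ y t : ℝ, 0 < Wfun ψ (ψ (y, t), y, t)) (w : ℝ × ℝ) :
    ¬ (Pf ψ w = 0 ∧ Rf ψ w = 0) := by
  rintro ⟨hP, hR⟩
  have hI := I1 (ψ := ψ) w
  rw [hP, hR] at hI
  have hq : Qf ψ w = 0 := by linarith [hI]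
  have := SposW hψ hchar w
  rw [hP, hq] at this
  norm_num at this

lemma contPsi : Continuous ψ := (diffψ hψ).continuous
lemma contU : Continuous (Uf ψ) := (contDiff_U hψ).continuous
lemma contV : Continuous (Vf ψ) := (contDiff_V hψ).continuous
lemma contAyy : Continuous (Ayy ψ) :=
  ((contDiff_U hψ).continuous_fderiv one_ne_zero).clm_apply continuous_const
lemma contAyt : Continuous (Ayt ψ) :=
  ((contDiff_V hψ).continuous_fderiv one_ne_zero).clm_apply continuous_const
lemma contAtt : Continuous (Att ψ) :=
  ((contDiff_V hψ).continuous_fderiv one_ne_zero).clm_apply continuous_const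
lemma contP : Continuous (Pf ψ) := by
  unfold Pf
  exact continuous_const.add ((continuous_fst.div_const 2).mul (contV hψ))
lemma contQ : Continuous (Qf ψ) := by
  unfold Qf
  exact ((contU hψ).neg).sub ((((contPsi hψ).div_const 2)).mul (contV hψ))
lemma contR : Continuous (Rf ψ) := by
  unfold Rf
  exact ((continuous_fst.mul (contQ hψ)).add ((contPsi hψ).mul (contP hψ))).div_const 2

lemma hasDerivAt_psi_line (w z : ℝ × ℝ) (s : ℝ) :
    HasDerivAt (fun s' : ℝ => ψ (w + s' • z))
      (z.1 * Uf ψ (w + s • z) + z.2 * Vf ψ (w + s • z)) s := by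
  have h := hasDerivAt_line (diffψ hψ) w z s
  rwa [show fderiv ℝ ψ (w + s • z) z
      = z.1 * Uf ψ (w + s • z) + z.2 * Vf ψ (w + s • z) from by
    conv_lhs => rw [show z = (z.1, z.2) from rfl]
    exact clm_pair _ _ _] at h

lemma hasDerivAt_U_line (w z : ℝ × ℝ) (s : ℝ) :
    HasDerivAt (fun s' : ℝ => Uf ψ (w + s' • z))
      (z.1 * Ayy ψ (w + s • z) + z.2 * Ayt ψ (w + s • z)) s := by
  have h := hasDerivAt_line (diffU hψ) w z s
  rwa [show fderiv ℝ (Uf ψ) (w + s • z) z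
      = z.1 * Ayy ψ (w + s • z) + z.2 * Ayt ψ (w + s • z) from by
    conv_lhs => rw [show z = (z.1, z.2) from rfl]
    rw [clm_pair _ _ _, schwarz hψ]; rfl] at h

lemma hasDerivAt_V_line (w z : ℝ × ℝ) (s : ℝ) :
    HasDerivAt (fun s' : ℝ => Vf ψ (w + s' • z))
      (z.1 * Ayt ψ (w + s • z) + z.2 * Att ψ (w + s • z)) s := by
  have h := hasDerivAt_line (diffV hψ) w z s
  rwa [show fderiv ℝ (Vf ψ) (w + s • z) z
      = z.1 * Ayt ψ (w + s • z) + z.2 * Att ψ (w + s • z) from by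
    conv_lhs => rw [show z = (z.1, z.2) from rfl]
    rw [clm_pair _ _ _]; rfl] at h

omit hψ in
lemma fst_line (w z : ℝ × ℝ) (s : ℝ) :
    HasDerivAt (fun s' : ℝ => (w + s' • z).1) z.1 s := by
  simp only [Prod.fst_add, Prod.smul_fst, smul_eq_mul]
  simpa using ((hasDerivAt_id s).mul_const z.1).const_add w.1

lemma hasDerivAt_P_line (w z : ℝ × ℝ) (s : ℝ) :
    HasDerivAt (fun s' : ℝ => Pf ψ (w + s' • z)) (DPz ψ (w + s • z) z) s := by
  have h1 : HasDerivAt (fun s' : ℝ => 1 + (w + s' • z).1 / 2 * Vf ψ (w + s' • z))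
      (z.1 / 2 * Vf ψ (w + s • z)
        + (w + s • z).1 / 2 * (z.1 * Ayt ψ (w + s • z) + z.2 * Att ψ (w + s • z))) s := by
    exact (((fst_line w z s).div_const 2).mul (hasDerivAt_V_line hψ w z s)).const_add 1
  exact h1

lemma hasDerivAt_Q_line (w z : ℝ × ℝ) (s : ℝ) :
    HasDerivAt (fun s' : ℝ => Qf ψ (w + s' • z)) (DQz ψ (w + s • z) z) s := by
  have h1 : HasDerivAt (fun s' : ℝ => -Uf ψ (w + s' • z) - ψ (w + s' • z) / 2 * Vf ψ (w + s' • z))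
      (DQz ψ (w + s • z) z) s := by
    have := ((hasDerivAt_U_line hψ w z s).neg).sub
      ((((hasDerivAt_psi_line hψ w z s).div_const 2)).mul (hasDerivAt_V_line hψ w z s))
    refine this.congr_deriv (Eq.symm ?_)
    simp only [DQz]; ring
  exact h1

lemma hasDerivAt_R_line (w z : ℝ × ℝ) (s : ℝ) :
    HasDerivAt (fun s' : ℝ => Rf ψ (w + s' • z)) (DRz ψ (w + s • z) z) s := by
  have h1 : HasDerivAt
      (fun s' : ℝ => ((w + s' • z).1 * Qf ψ (w + s' • z) + ψ (w + s' • z) * Pf ψ (w + s' • z)) / 2)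
      (DRz ψ (w + s • z) z) s := by
    have := (((fst_line w z s).mul (hasDerivAt_Q_line hψ w z s)).add
      ((hasDerivAt_psi_line hψ w z s).mul (hasDerivAt_P_line hψ w z s))).div_const 2
    refine this.congr_deriv (Eq.symm ?_)
    simp only [DRz]; ring
  exact h1

omit hψ in
/-- Key pointwise identity: the derivative of `(P,R)` along `Z` is parallel to `(P,R)`. -/
lemma I2 (hpde : ∀ w : ℝ × ℝ, Pf ψ w ^ 2 * Ayy ψ w + 2 * Pf ψ w * Rf ψ w * Ayt ψ w
      + Rf ψ w ^ 2 * Att ψ w = 0) (w : ℝ × ℝ) :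
    DPz ψ w (Zv ψ w) * Rf ψ w = DRz ψ w (Zv ψ w) * Pf ψ w := by
  have hw := hpde w
  simp only [DPz, DQz, DRz, Zv, Pf, Qf, Rf] at *
  linear_combination (w.1 / 2) * hw

end moar
end lines

/-- integrating factor: a solution of `F' = h·F` with `F 0 = 0` vanishes. -/
lemma ode_vanish {F h : ℝ → ℝ} (hF : ∀ s, HasDerivAt F (h s * F s) s)
    (hh : Continuous h) (h0 : F 0 = 0) (s : ℝ) : F s = 0 := by
  set H := fun s' : ℝ => ∫ x in (0:ℝ)..s', h x with hH
  have hHd : ∀ s', HasDerivAt H (h s') s' := fun s' =>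
    intervalIntegral.integral_hasDerivAt_right (hh.intervalIntegrable _ _)
      (hh.stronglyMeasurableAtFilter _ _) hh.continuousAt
  have hg : ∀ s', HasDerivAt (fun x => F x * Real.exp (-H x)) 0 s' := by
    intro s'
    have hE : HasDerivAt (fun x => Real.exp (-H x)) (Real.exp (-H s') * -h s') s' :=
      ((hHd s').neg).exp
    have := (hF s').mul hE
    refine this.congr_deriv (Eq.symm ?_)
    ring
  have hconst := is_const_of_deriv_eq_zero (f := fun x => F x * Real.exp (-H x))
    (fun x => (hg x).differentiableAt) (fun x => (hg x).deriv) s 0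
  have hs0 : F s * Real.exp (-H s) = 0 := by
    rw [hconst, h0, zero_mul]
  exact (mul_eq_zero.mp hs0).resolve_right (Real.exp_ne_zero _)

section phaseC
variable (hψ : ContDiff ℝ 2 ψ)
include hψ

lemma contDPz_comp {γ ζ : ℝ → ℝ × ℝ} (hγ : Continuous γ) (hζ : Continuous ζ) :
    Continuous fun s => DPz ψ (γ s) (ζ s) := by
  unfold DPz
  exact ((hζ.fst.div_const 2).mul ((contV hψ).comp hγ)).add
    ((hγ.fst.div_const 2).mul
      ((hζ.fst.mul ((contAyt hψ).comp hγ)).add (hζ.snd.mul ((contAtt hψ).comp hγ))))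

lemma contDQz_comp {γ ζ : ℝ → ℝ × ℝ} (hγ : Continuous γ) (hζ : Continuous ζ) :
    Continuous fun s => DQz ψ (γ s) (ζ s) := by
  unfold DQz
  exact (((hζ.fst.mul ((contAyy hψ).comp hγ)).add (hζ.snd.mul ((contAyt hψ).comp hγ))).neg.sub
    ((((hζ.fst.mul ((contU hψ).comp hγ)).add (hζ.snd.mul ((contV hψ).comp hγ))).div_const 2).mul
      ((contV hψ).comp hγ))).sub
    ((((contPsi hψ).comp hγ).div_const 2).mul
      ((hζ.fst.mul ((contAyt hψ).comp hγ)).add (hζ.snd.mul ((contAtt hψ).comp hγ))))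

lemma contDRz_comp {γ ζ : ℝ → ℝ × ℝ} (hγ : Continuous γ) (hζ : Continuous ζ) :
    Continuous fun s => DRz ψ (γ s) (ζ s) := by
  unfold DRz
  have h := (((hζ.fst.mul ((contQ hψ).comp hγ)).add
    ((hγ.fst.mul (contDQz_comp hψ hγ hζ)).add
      (((hζ.fst.mul ((contU hψ).comp hγ)).add (hζ.snd.mul ((contV hψ).comp hγ))).mul
        ((contP hψ).comp hγ)))).add
    (((contPsi hψ).comp hγ).mul (contDPz_comp hψ hγ hζ))).div_const 2
  refine h.congr fun x => ?_
  simp [Function.comp]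
  ring

lemma contZv : Continuous (Zv ψ) := (contP hψ).prodMk (contR hψ)

/-- The planar field `Z` stays parallel to `Z(w₀)` along the straight line from `w₀`
in direction `Z(w₀)`. -/
lemma parallel (hchar : ∀ y t : ℝ, 0 < Wfun ψ (ψ (y, t), y, t))
    (hpde : ∀ w : ℝ × ℝ, Pf ψ w ^ 2 * Ayy ψ w + 2 * Pf ψ w * Rf ψ w * Ayt ψ w
      + Rf ψ w ^ 2 * Att ψ w = 0)
    (w₀ : ℝ × ℝ) (s : ℝ) :
    Pf ψ (w₀ + s • Zv ψ w₀) * Rf ψ w₀ = Rf ψ (w₀ + s • Zv ψ w₀) * Pf ψ w₀ := by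
  set z := Zv ψ w₀ with hz
  set ℓ := fun s' : ℝ => w₀ + s' • z with hℓ
  have hℓcont : Continuous ℓ :=
    continuous_const.add (continuous_id.smul continuous_const)
  have hnne : ∀ s', Pf ψ (ℓ s') ^ 2 + Rf ψ (ℓ s') ^ 2 ≠ 0 := by
    intro s' h0
    have h1 : Pf ψ (ℓ s') ^ 2 = 0 := by nlinarith [sq_nonneg (Rf ψ (ℓ s'))]
    have h2 : Rf ψ (ℓ s') ^ 2 = 0 := by nlinarith [sq_nonneg (Pf ψ (ℓ s'))]
    exact Zv_ne hψ hchar (ℓ s')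
      ⟨(pow_eq_zero_iff (by norm_num : (2:ℕ) ≠ 0)).mp h1,
       (pow_eq_zero_iff (by norm_num : (2:ℕ) ≠ 0)).mp h2⟩
  set F := fun s' => Pf ψ (ℓ s') * Rf ψ w₀ - Rf ψ (ℓ s') * Pf ψ w₀ with hF
  set h := fun s' => ((Pf ψ (ℓ s') * Pf ψ w₀ + Rf ψ (ℓ s') * Rf ψ w₀)
      * (DPz ψ (ℓ s') (Zv ψ (ℓ s')) * Pf ψ (ℓ s') + DRz ψ (ℓ s') (Zv ψ (ℓ s')) * Rf ψ (ℓ s'))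
      + (DPz ψ (ℓ s') (-Rf ψ (ℓ s'), Pf ψ (ℓ s')) * Rf ψ w₀
        - DRz ψ (ℓ s') (-Rf ψ (ℓ s'), Pf ψ (ℓ s')) * Pf ψ w₀)
        * (Pf ψ (ℓ s') ^ 2 + Rf ψ (ℓ s') ^ 2))
      / ((Pf ψ (ℓ s') ^ 2 + Rf ψ (ℓ s') ^ 2) * (Pf ψ (ℓ s') ^ 2 + Rf ψ (ℓ s') ^ 2)) with hh
  have hhcont : Continuous h := by
    rw [hh]
    apply Continuous.div
    · exact ((((contP hψ).comp hℓcont).mul continuous_const).add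
        (((contR hψ).comp hℓcont).mul continuous_const)).mul
        (((contDPz_comp hψ hℓcont ((contZv hψ).comp hℓcont)).mul ((contP hψ).comp hℓcont)).add
          ((contDRz_comp hψ hℓcont ((contZv hψ).comp hℓcont)).mul ((contR hψ).comp hℓcont)))
        |>.add
        (((contDPz_comp hψ hℓcont
            ((((contR hψ).comp hℓcont).neg).prodMk ((contP hψ).comp hℓcont))).mul
              continuous_const |>.sub
          ((contDRz_comp hψ hℓcont
            ((((contR hψ).comp hℓcont).neg).prodMk ((contP hψ).comp hℓcont))).mul
              continuous_const)).mul
          ((((contP hψ).comp hℓcont).pow 2).add (((contR hψ).comp hℓcont).pow 2)))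
    · exact (((((contP hψ).comp hℓcont).pow 2).add (((contR hψ).comp hℓcont).pow 2)).mul
        ((((contP hψ).comp hℓcont).pow 2).add (((contR hψ).comp hℓcont).pow 2)))
    · intro x
      exact mul_ne_zero (hnne x) (hnne x)
  have hFd : ∀ s', HasDerivAt F (h s' * F s') s' := by
    intro s'
    have hd : HasDerivAt F (DPz ψ (ℓ s') z * Rf ψ w₀ - DRz ψ (ℓ s') z * Pf ψ w₀) s' := by
      rw [hF]
      exact ((hasDerivAt_P_line hψ w₀ z s').mul_const _).sub
        ((hasDerivAt_R_line hψ w₀ z s').mul_const _)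
    have hmain : DPz ψ (ℓ s') z * Rf ψ w₀ - DRz ψ (ℓ s') z * Pf ψ w₀ = h s' * F s' := by
      rw [hh, hF, hz]
      rw [div_mul_eq_mul_div, eq_comm, div_eq_iff (mul_ne_zero (hnne s') (hnne s'))]
      have hI2 := I2 hpde (ℓ s')
      simp only [DPz, DQz, DRz, Zv] at hI2 ⊢
      linear_combination
        (-((Pf ψ (ℓ s') * Pf ψ w₀ + Rf ψ (ℓ s') * Rf ψ w₀) ^ 2)) * hI2
    rwa [hmain] at hd
  have h0 : F 0 = 0 := by
    have hl0 : ℓ 0 = w₀ := by rw [hℓ]; simp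
    rw [hF]
    simp only [hl0]
    ring
  have hres := ode_vanish hFd hhcont h0 s
  have hres' : Pf ψ (ℓ s) * Rf ψ w₀ - Rf ψ (ℓ s) * Pf ψ w₀ = 0 := hres
  show Pf ψ (ℓ s) * Rf ψ w₀ = Rf ψ (ℓ s) * Pf ψ w₀
  linarith

end phaseC

section phaseD
variable (hψ : ContDiff ℝ 2 ψ)
include hψ

/-- The surface is ruled: ψ is affine along each line of the characteristic field `Z`. -/
lemma ruled (hchar : ∀ y t : ℝ, 0 < Wfun ψ (ψ (y, t), y, t))
    (hpde : ∀ w : ℝ × ℝ, Pf ψ w ^ 2 * Ayy ψ w + 2 * Pf ψ w * Rf ψ w * Ayt ψ w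
      + Rf ψ w ^ 2 * Att ψ w = 0)
    (w₀ : ℝ × ℝ) (s : ℝ) :
    ψ (w₀ + s • Zv ψ w₀) = ψ w₀ - s * Qf ψ w₀ := by
  set z := Zv ψ w₀ with hz
  set ℓ := fun s' : ℝ => w₀ + s' • z with hℓ
  have hl0 : ℓ 0 = w₀ := by rw [hℓ]; simp
  have hn0 : Pf ψ w₀ ^ 2 + Rf ψ w₀ ^ 2 ≠ 0 := by
    intro h0
    have h1 : Pf ψ w₀ ^ 2 = 0 := by nlinarith [sq_nonneg (Rf ψ w₀)]
    have h2 : Rf ψ w₀ ^ 2 = 0 := by nlinarith [sq_nonneg (Pf ψ w₀)]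
    exact Zv_ne hψ hchar w₀
      ⟨(pow_eq_zero_iff (by norm_num : (2:ℕ) ≠ 0)).mp h1,
       (pow_eq_zero_iff (by norm_num : (2:ℕ) ≠ 0)).mp h2⟩
  have hpar : ∀ s', Pf ψ (ℓ s') * Rf ψ w₀ = Rf ψ (ℓ s') * Pf ψ w₀ :=
    fun s' => parallel hψ hchar hpde w₀ s'
  have hQform : ∀ s', Pf ψ w₀ * (Pf ψ w₀ * Ayy ψ (ℓ s') + Rf ψ w₀ * Ayt ψ (ℓ s'))
      + Rf ψ w₀ * (Pf ψ w₀ * Ayt ψ (ℓ s') + Rf ψ w₀ * Att ψ (ℓ s')) = 0 := by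
    intro s'
    set μ := (Pf ψ (ℓ s') * Pf ψ w₀ + Rf ψ (ℓ s') * Rf ψ w₀)
      / (Pf ψ w₀ ^ 2 + Rf ψ w₀ ^ 2) with hμ
    have hPμ : Pf ψ (ℓ s') = μ * Pf ψ w₀ := by
      rw [hμ, div_mul_eq_mul_div, eq_div_iff hn0]
      linear_combination Rf ψ w₀ * hpar s'
    have hRμ : Rf ψ (ℓ s') = μ * Rf ψ w₀ := by
      rw [hμ, div_mul_eq_mul_div, eq_div_iff hn0]
      linear_combination (-(Pf ψ w₀)) * hpar s'
    have hμne : μ ≠ 0 := by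
      intro h0
      refine Zv_ne hψ hchar (ℓ s') ⟨?_, ?_⟩
      · rw [hPμ, h0, zero_mul]
      · rw [hRμ, h0, zero_mul]
    have hw := hpde (ℓ s')
    rw [hPμ, hRμ] at hw
    have hfac : μ ^ 2 * (Pf ψ w₀ * (Pf ψ w₀ * Ayy ψ (ℓ s') + Rf ψ w₀ * Ayt ψ (ℓ s'))
        + Rf ψ w₀ * (Pf ψ w₀ * Ayt ψ (ℓ s') + Rf ψ w₀ * Att ψ (ℓ s'))) = 0 := by
      linear_combination hw
    exact (mul_eq_zero.mp hfac).resolve_left (pow_ne_zero 2 hμne)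
  have hg1d : ∀ s', HasDerivAt
      (fun σ => Pf ψ w₀ * Uf ψ (ℓ σ) + Rf ψ w₀ * Vf ψ (ℓ σ)) 0 s' := by
    intro s'
    have hcomb := ((hasDerivAt_U_line hψ w₀ z s').const_mul (Pf ψ w₀)).add
      ((hasDerivAt_V_line hψ w₀ z s').const_mul (Rf ψ w₀))
    have hz1 : z.1 = Pf ψ w₀ := rfl
    have hz2 : z.2 = Rf ψ w₀ := rfl
    have hb : w₀ + s' • z = ℓ s' := rfl
    rw [hz1, hz2, hb] at hcomb
    refine hcomb.congr_deriv (Eq.symm ?_)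
    exact (hQform s').symm
  have hg1const : ∀ s', Pf ψ w₀ * Uf ψ (ℓ s') + Rf ψ w₀ * Vf ψ (ℓ s') = -Qf ψ w₀ := by
    intro s'
    have hc := is_const_of_deriv_eq_zero
      (f := fun σ => Pf ψ w₀ * Uf ψ (ℓ σ) + Rf ψ w₀ * Vf ψ (ℓ σ))
      (fun x => (hg1d x).differentiableAt) (fun x => (hg1d x).deriv) s' 0
    simp only [hl0] at hc
    rw [hc]
    have := I1 (ψ := ψ) w₀
    linarith
  have hgd : ∀ s', HasDerivAt (fun σ => ψ (ℓ σ) + σ * Qf ψ w₀) 0 s' := by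
    intro s'
    have h1 := hasDerivAt_psi_line hψ w₀ z s'
    have hz1 : z.1 = Pf ψ w₀ := rfl
    have hz2 : z.2 = Rf ψ w₀ := rfl
    have hb : w₀ + s' • z = ℓ s' := rfl
    rw [hz1, hz2, hb] at h1
    have h2 := (hasDerivAt_id s').mul_const (Qf ψ w₀)
    have hcomb := h1.add h2
    refine hcomb.congr_deriv (Eq.symm ?_)
    linear_combination -(hg1const s')
  have hgc := is_const_of_deriv_eq_zero
    (f := fun σ => ψ (ℓ σ) + σ * Qf ψ w₀)
    (fun x => (hgd x).differentiableAt) (fun x => (hgd x).deriv) s 0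
  simp only [hl0] at hgc
  have : ψ (ℓ s) + s * Qf ψ w₀ = ψ w₀ := by
    rw [hgc]; ring
  show ψ (ℓ s) = ψ w₀ - s * Qf ψ w₀
  linarith

end phaseD

section phaseE
variable (hψ : ContDiff ℝ 2 ψ)
include hψ

omit hψ in
lemma Pf_axis (τ : ℝ) : Pf ψ (0, τ) = 1 := by simp [Pf]

omit hψ in
lemma Rf_axis (τ : ℝ) : Rf ψ (0, τ) = ψ (0, τ) / 2 := by simp [Rf, Pf]

omit hψ in
lemma Zv_axis (τ : ℝ) : Zv ψ (0, τ) = (1, ψ (0, τ) / 2) := by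
  rw [Zv, Pf_axis, Rf_axis]

/-- All the rulings crossing the t-axis have the same slope: `ψ(0,·)` is constant. -/
lemma axis_const (hchar : ∀ y t : ℝ, 0 < Wfun ψ (ψ (y, t), y, t))
    (hpde : ∀ w : ℝ × ℝ, Pf ψ w ^ 2 * Ayy ψ w + 2 * Pf ψ w * Rf ψ w * Ayt ψ w
      + Rf ψ w ^ 2 * Att ψ w = 0)
    (τ₁ τ₂ : ℝ) : ψ (0, τ₁) = ψ (0, τ₂) := by
  by_contra hne
  set k₁ := ψ (0, τ₁) / 2 with hk₁
  set k₂ := ψ (0, τ₂) / 2 with hk₂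
  have hkne : k₁ - k₂ ≠ 0 := by
    rw [hk₁, hk₂]
    intro h0
    exact hne (by linarith [h0])
  set s₀ := (τ₂ - τ₁) / (k₁ - k₂) with hs₀
  have hw1 : (0, τ₁) + s₀ • Zv ψ (0, τ₁) = (s₀, τ₁ + s₀ * k₁) := by
    rw [Zv_axis, ← hk₁, Prod.smul_mk, Prod.mk_add_mk, smul_eq_mul, smul_eq_mul]
    simp
  have hw2 : (0, τ₂) + s₀ • Zv ψ (0, τ₂) = (s₀, τ₂ + s₀ * k₂) := by
    rw [Zv_axis, ← hk₂, Prod.smul_mk, Prod.mk_add_mk, smul_eq_mul, smul_eq_mul]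
    simp
  have hsame : τ₁ + s₀ * k₁ = τ₂ + s₀ * k₂ := by
    rw [hs₀]
    field_simp
    ring
  have hP1 := parallel hψ hchar hpde (0, τ₁) s₀
  have hP2 := parallel hψ hchar hpde (0, τ₂) s₀
  rw [hw1, Pf_axis, Rf_axis, ← hk₁] at hP1
  rw [hw2, Pf_axis, Rf_axis, ← hk₂, ← hsame] at hP2
  -- hP1 : Pf (s₀, τ₁+s₀k₁) * k₁ = Rf (s₀,τ₁+s₀k₁) * 1, similarly hP2 at same point
  have hPzero : Pf ψ (s₀, τ₁ + s₀ * k₁) = 0 := by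
    have hsub : Pf ψ (s₀, τ₁ + s₀ * k₁) * (k₁ - k₂) = 0 := by linarith [hP1, hP2]
    exact (mul_eq_zero.mp hsub).resolve_right hkne
  have hRzero : Rf ψ (s₀, τ₁ + s₀ * k₁) = 0 := by
    rw [hPzero] at hP1
    linarith [hP1]
  exact Zv_ne hψ hchar _ ⟨hPzero, hRzero⟩

/-- the global strip normal form -/
lemma strip_form (hchar : ∀ y t : ℝ, 0 < Wfun ψ (ψ (y, t), y, t))
    (hpde : ∀ w : ℝ × ℝ, Pf ψ w ^ 2 * Ayy ψ w + 2 * Pf ψ w * Rf ψ w * Ayt ψ w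
      + Rf ψ w ^ 2 * Att ψ w = 0) (y t : ℝ) :
    ψ (y, t + y * (ψ (0, 0) / 2)) = ψ (0, 0) + y * Uf ψ (0, t) := by
  set x₀ := ψ (0, 0) with hx₀
  have hax : ∀ τ, ψ (0, τ) = x₀ := fun τ => axis_const hψ hchar hpde τ 0
  have hV0 : ∀ τ, Vf ψ (0, τ) = 0 := by
    intro τ
    have h1 := hasDerivAt_sliceT (diffψ hψ) 0 τ
    have h2 : (fun τ' => ψ (0, τ')) = fun _ => x₀ := funext fun τ' => hax τ'
    rw [h2] at h1
    exact h1.unique (hasDerivAt_const _ _)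
  have hQ0 : Qf ψ (0, t) = -Uf ψ (0, t) := by
    rw [Qf, hV0]
    ring
  have hr := ruled hψ hchar hpde (0, t) y
  rw [Zv_axis, hax t] at hr
  have hco : ((0 : ℝ), t) + y • ((1 : ℝ), x₀ / 2) = (y, t + y * (x₀ / 2)) := by
    rw [Prod.smul_mk, Prod.mk_add_mk, smul_eq_mul, smul_eq_mul]
    simp
  rw [hco, hQ0] at hr
  rw [hr]
  ring

end phaseE


end Stmt19Aux

open Stmt19Aux in
/-- if the entire graph `S = {(ψ(y,t), y, t)}` has empty characteristic locus,
is H-minimal, and is not a vertical plane, then after a left-translation `S` contains a strict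
graphical strip `{(yG(t), y, t) : y ∈ ℝ, t ∈ I}` with `G' > 0` on the open interval `I`. -/
theorem stmt19 (ψ : ℝ × ℝ → ℝ) (hψ : ContDiff ℝ 2 ψ)
    (hchar : ∀ y t : ℝ, 0 < Wfun ψ (ψ (y, t), y, t))
    (hmin : ∀ y t : ℝ,
      X1op (fun g => pfun ψ g / Wfun ψ g) (ψ (y, t), y, t)
        + X2op (fun g => qfun ψ g / Wfun ψ g) (ψ (y, t), y, t) = 0)
    (hnp : ¬ ∃ α β : ℝ, ∀ y t : ℝ, ψ (y, t) = α * y + β) :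
    ∃ g₀ : ℝ × ℝ × ℝ, ∃ a b : ℝ, a < b ∧ ∃ G : ℝ → ℝ,
      ContDiffOn ℝ 2 G (Set.Ioo a b) ∧
      (∀ t ∈ Set.Ioo a b, 0 < deriv G t) ∧
      ∀ y : ℝ, ∀ t ∈ Set.Ioo a b,
        hmul g₀ (y * G t, y, t) ∈ {g : ℝ × ℝ × ℝ | g.1 = ψ (g.2.1, g.2.2)} := by

  have hpde : ∀ w : ℝ × ℝ, Pf ψ w ^ 2 * Ayy ψ w + 2 * Pf ψ w * Rf ψ w * Ayt ψ w
      + Rf ψ w ^ 2 * Att ψ w = 0 := fun w => minimal_pde hψ hchar hmin w.1 w.2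
  set x₀ := ψ (0, 0) with hx₀
  set G := fun t : ℝ => ψ (1, t + x₀ / 2) - x₀ with hG
  have hstrip : ∀ y t : ℝ, ψ (y, t + y * (x₀ / 2)) = x₀ + y * Uf ψ (0, t) :=
    fun y t => strip_form hψ hchar hpde y t
  have hGU : ∀ t, G t = Uf ψ (0, t) := by
    intro t
    have h1 := hstrip 1 t
    rw [show ((1 : ℝ), t + 1 * (x₀ / 2)) = (1, t + x₀ / 2) from by norm_num] at h1
    rw [hG]
    simp only []
    linarith [h1]
  have hstripG : ∀ y t : ℝ, ψ (y, t + y * (x₀ / 2)) = x₀ + y * G t := by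
    intro y t
    rw [hGU t]
    exact hstrip y t
  have hGd : ∀ t, HasDerivAt G (Vf ψ (1, t + x₀ / 2)) t := by
    intro t
    have h1 := hasDerivAt_sliceT (diffψ hψ) 1 (t + x₀ / 2)
    have h2 : HasDerivAt (fun t' : ℝ => t' + x₀ / 2) 1 t := (hasDerivAt_id t).add_const _
    have h3 := h1.comp t h2
    have h4 : HasDerivAt (fun t' : ℝ => ψ (1, t' + x₀ / 2)) (Vf ψ (1, t + x₀ / 2)) t := by
      simpa [Function.comp_def, Vf] using h3
    exact h4.sub_const x₀
  have hderivG : ∀ t, deriv G t = Vf ψ (1, t + x₀ / 2) := fun t => (hGd t).deriv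
  have hVsheared : ∀ y t : ℝ, Vf ψ (y, t + y * (x₀ / 2)) = y * deriv G t := by
    intro y t
    have h1 := hasDerivAt_sliceT (diffψ hψ) y (t + y * (x₀ / 2))
    have h2 : HasDerivAt (fun t' : ℝ => t' + y * (x₀ / 2)) 1 t := (hasDerivAt_id t).add_const _
    have h3 := h1.comp t h2
    have h4 : HasDerivAt (fun t' : ℝ => ψ (y, t' + y * (x₀ / 2)))
        (Vf ψ (y, t + y * (x₀ / 2))) t := by
      simpa [Function.comp_def, Vf] using h3
    have h5 : (fun t' : ℝ => ψ (y, t' + y * (x₀ / 2))) = fun t' => x₀ + y * G t' :=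
      funext fun t' => hstripG y t'
    rw [h5] at h4
    have h6 : HasDerivAt (fun t' => x₀ + y * G t') (y * deriv G t) t := by
      rw [hderivG]
      exact ((hGd t).const_mul y).const_add x₀
    exact h4.unique h6
  have hUsheared : ∀ y t : ℝ, Uf ψ (y, t + y * (x₀ / 2))
      = G t - x₀ / 2 * Vf ψ (y, t + y * (x₀ / 2)) := by
    intro y t
    have hco : ∀ y' : ℝ, ((0 : ℝ), t) + y' • ((1 : ℝ), x₀ / 2) = (y', t + y' * (x₀ / 2)) := by
      intro y'
      rw [Prod.smul_mk, Prod.mk_add_mk, smul_eq_mul, smul_eq_mul]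
      simp
    have h1 := hasDerivAt_psi_line hψ (0, t) (1, x₀ / 2) y
    rw [hco y] at h1
    have h2 : (fun y' : ℝ => ψ ((0, t) + y' • ((1 : ℝ), x₀ / 2))) = fun y' => x₀ + y' * G t := by
      funext y'
      rw [hco y']
      exact hstripG y' t
    rw [h2] at h1
    have h3 : HasDerivAt (fun y' : ℝ => x₀ + y' * G t) (G t) y := by
      simpa using ((hasDerivAt_id y).mul_const (G t)).const_add x₀
    have h4 := h1.unique h3
    simp only [] at h4
    linarith [h4]
  have hGnonneg : ∀ t, 0 ≤ deriv G t := by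
    intro t
    by_contra hneg
    push_neg at hneg
    set m := deriv G t with hm
    have hm0 : m < 0 := hneg
    set yc := Real.sqrt (-(2 / m)) with hyc
    have hmpos : 0 < -(2 / m) := by
      have := div_neg_of_pos_of_neg (by norm_num : (0:ℝ) < 2) hm0
      linarith
    have hy2 : yc ^ 2 = -(2 / m) := Real.sq_sqrt hmpos.le
    have hy2' : yc ^ 2 * m = -2 := by
      rw [hy2]
      field_simp [hm0.ne]
    have hVy : Vf ψ (yc, t + yc * (x₀ / 2)) = yc * m := hVsheared yc t
    have hP : Pf ψ (yc, t + yc * (x₀ / 2)) = 0 := by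
      show 1 + yc / 2 * Vf ψ (yc, t + yc * (x₀ / 2)) = 0
      rw [hVy]
      linear_combination (1 / 2) * hy2'
    have hψw : ψ (yc, t + yc * (x₀ / 2)) = x₀ + yc * G t := hstripG yc t
    have hQ : Qf ψ (yc, t + yc * (x₀ / 2)) = 0 := by
      show -Uf ψ (yc, t + yc * (x₀ / 2))
        - ψ (yc, t + yc * (x₀ / 2)) / 2 * Vf ψ (yc, t + yc * (x₀ / 2)) = 0
      rw [hUsheared yc t, hVy, hψw]
      linear_combination (-(G t) / 2) * hy2'
    have hcontr := SposW hψ hchar (yc, t + yc * (x₀ / 2))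
    rw [hP, hQ] at hcontr
    norm_num at hcontr
  have hGnotconst : ∃ t₀, 0 < deriv G t₀ := by
    by_contra hno
    push_neg at hno
    have hzero : ∀ t, deriv G t = 0 := fun t => le_antisymm (hno t) (hGnonneg t)
    have hGconst : ∀ t, G t = G 0 := fun t =>
      is_const_of_deriv_eq_zero (fun x => (hGd x).differentiableAt) hzero t 0
    apply hnp
    refine ⟨G 0, x₀, fun y t => ?_⟩
    have h1 := hstripG y (t - y * (x₀ / 2))
    rw [hGconst (t - y * (x₀ / 2)), show t - y * (x₀ / 2) + y * (x₀ / 2) = t from by ring] at h1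
    rw [h1]
    ring
  obtain ⟨t₀, ht₀⟩ := hGnotconst
  have hcont : Continuous (fun t => deriv G t) := by
    have he : (fun t => deriv G t) = fun t => Vf ψ (1, t + x₀ / 2) := funext hderivG
    rw [he]
    exact (contV hψ).comp (continuous_const.prodMk (continuous_id.add continuous_const))
  have hopen : IsOpen {t : ℝ | 0 < deriv G t} := isOpen_lt continuous_const hcont
  obtain ⟨ε, hε, hball⟩ := Metric.isOpen_iff.mp hopen t₀ ht₀
  have hGc2 : ContDiff ℝ 2 G := by
    rw [hG]
    exact (hψ.comp (contDiff_const.prodMk (contDiff_id.add contDiff_const))).sub contDiff_const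
  refine ⟨(x₀, 0, 0), t₀ - ε, t₀ + ε, by linarith, G, hGc2.contDiffOn, ?_, ?_⟩
  · intro t ht
    apply hball
    rw [Real.ball_eq_Ioo]
    exact ht
  · intro y t ht
    show (hmul (x₀, 0, 0) (y * G t, y, t)).1
        = ψ ((hmul (x₀, 0, 0) (y * G t, y, t)).2.1, (hmul (x₀, 0, 0) (y * G t, y, t)).2.2)
    simp only [hmul]
    rw [show ((0 : ℝ) + y, (0 : ℝ) + t + (x₀ * y - y * G t * 0) / 2) = (y, t + y * (x₀ / 2))
      from by rw [Prod.mk.injEq]; constructor <;> ring]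
    exact (hstripG y t).symm
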